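/- Let n ≥ 2, τ ∈ ℌⁿ, and let τ' be τ with its topmost row and leftmost column removed, and let y₁, …, y_{n-1} be the positive reals with τ_{n-i,n-i} = ∏_{j=1}^{i} y_j for i ≥ 1. Then for Re(s) > 1, ∑_{(m₂,…,m_n) ≠ 0} (det τ)^s / ‖(m₂ … m_n)τ'‖^{ns/2} = (∏_{i=1}^{n-1} y_i^{i/(n-1)})^s · E'_{n-1}(τ', (n/(n-1)) s), where E'_{n-1}(τ', w) = ∑_{(m₂,…,m_n) ≠ 0} (det τ')^w / ‖(m₂…m_n)τ'‖^{(n-1)w/2}. -/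

import Mathlib

open Finset

theorem eisenstein_m1_zero_term (n : ℕ) (hn : 1 ≤ n)
    (τ : Matrix (Fin (n+1)) (Fin (n+1)) ℝ)
    (hupper : ∀ i j : Fin (n+1), j < i → τ i j = 0)
    (hdiag : ∀ i, 0 < τ i i)
    (hlast : τ (Fin.last n) (Fin.last n) = 1)
    (y : Fin n → ℝ) (hy : ∀ i, 0 < y i)
    (hyrel : ∀ i : Fin n,
      τ ⟨n - 1 - (i : ℕ), by omega⟩ ⟨n - 1 - (i : ℕ), by omega⟩
        = ∏ j ∈ Finset.Iic i, y j)
    (τ' : Matrix (Fin n) (Fin n) ℝ)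
    (hτ' : ∀ i j : Fin n, τ' i j = τ i.succ j.succ)
    (s : ℂ) (hs : 1 < s.re) :
    ∑' m : {v : Fin n → ℤ // v ≠ 0},
        (τ.det : ℂ) ^ s /
          ((Real.sqrt (∑ j : Fin n, (∑ i : Fin n, (m.1 i : ℝ) * τ' i j) ^ 2) : ℝ) : ℂ)
            ^ (((n : ℂ) + 1) * s / 2)
      = ((∏ i : Fin n, y i ^ ((((i : ℕ) : ℝ) + 1) / n) : ℝ) : ℂ) ^ s *
        ∑' m : {v : Fin n → ℤ // v ≠ 0},
          (τ'.det : ℂ) ^ ((((n : ℂ) + 1) / (n : ℂ)) * s) /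
            ((Real.sqrt (∑ j : Fin n, (∑ i : Fin n, (m.1 i : ℝ) * τ' i j) ^ 2) : ℝ) : ℂ)
              ^ ((n : ℂ) * ((((n : ℂ) + 1) / (n : ℂ)) * s) / 2) := by
  have hnC : (n : ℂ) ≠ 0 := Nat.cast_ne_zero.mpr (by omega)
  have hnR : (0:ℝ) < (n:ℝ) := by exact_mod_cast hn
  -- exponents on the denominators agree
  have hexp : (n : ℂ) * ((((n : ℂ) + 1) / (n : ℂ)) * s) / 2 = ((n : ℂ) + 1) * s / 2 := by
    field_simp
  -- determinants of upper triangular matrices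
  have hτBT : τ.BlockTriangular id := fun i j h => hupper i j h
  have hdetτ : τ.det = ∏ i, τ i i := Matrix.det_of_upperTriangular hτBT
  have hτ'BT : τ'.BlockTriangular id := by
    intro i j h
    rw [hτ' i j]
    exact hupper _ _ (Fin.succ_lt_succ_iff.mpr h)
  have hdetτ' : τ'.det = ∏ i, τ' i i := Matrix.det_of_upperTriangular hτ'BT
  set A : ℝ := ∏ i, τ i i with hA
  set B : ℝ := ∏ i : Fin n, τ i.succ i.succ with hBdef
  have hdetτ'B : τ'.det = B := by
    rw [hdetτ']
    exact Finset.prod_congr rfl fun i _ => hτ' i i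
  have hApos : 0 < A := Finset.prod_pos fun i _ => hdiag i
  have hBpos : 0 < B := Finset.prod_pos fun i _ => hdiag _
  set D : ℝ := ∏ i : Fin n, y i with hD
  have hDpos : 0 < D := Finset.prod_pos fun i _ => hy i
  -- τ 0 0 = ∏ y
  have hd0 : τ 0 0 = D := by
    have h := hyrel ⟨n - 1, by omega⟩
    have hidx : (⟨n - 1 - ((⟨n - 1, by omega⟩ : Fin n) : ℕ), by omega⟩ : Fin (n+1)) = 0 := by
      apply Fin.ext
      simp
    have hIic : Finset.Iic (⟨n - 1, by omega⟩ : Fin n) = Finset.univ := by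
      ext j
      simp only [Finset.mem_Iic, Finset.mem_univ, iff_true]
      rw [Fin.le_def]
      simp
      omega
    rw [hidx, hIic] at h
    rw [h, hD]
  -- A = D * B
  have hADB : A = D * B := by
    rw [hA, Fin.prod_univ_succ, hd0, hBdef]
  -- A as a product over y
  have hAQ : A = ∏ i : Fin n, ∏ j ∈ Finset.Iic i, y j := by
    rw [hA, Fin.prod_univ_castSucc, hlast, mul_one]
    rw [← Fintype.prod_bijective Fin.rev Fin.rev_bijective
      (fun i => τ i.rev.castSucc i.rev.castSucc) _ (fun i => rfl)]
    refine Finset.prod_congr rfl fun i _ => ?_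
    have hidx : (i.rev.castSucc : Fin (n+1)) = ⟨n - 1 - (i:ℕ), by omega⟩ := by
      apply Fin.ext
      simp [Fin.rev]
      omega
    rw [hidx, hyrel i]
  have hQ : (∏ i : Fin n, ∏ j ∈ Finset.Iic i, y j) = ∏ j : Fin n, y j ^ (n - (j:ℕ)) := by
    rw [Finset.prod_comm' (t' := Finset.univ) (s' := fun j => Finset.Ici j)
      (fun i j => by simp [Finset.mem_Iic, Finset.mem_Ici])]
    refine Finset.prod_congr rfl fun j _ => ?_
    rw [Finset.prod_const, Fin.card_Ici]
  -- B as a product over y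
  have hB : B = ∏ j : Fin n, y j ^ (n - 1 - (j:ℕ)) := by
    have h1 : D * B = D * ∏ j : Fin n, y j ^ (n - 1 - (j:ℕ)) := by
      rw [← hADB, hAQ, hQ, hD, ← Finset.prod_mul_distrib]
      refine Finset.prod_congr rfl fun j _ => ?_
      have : n - (j:ℕ) = (n - 1 - (j:ℕ)) + 1 := by omega
      rw [this, pow_succ]
      ring
    exact mul_left_cancel₀ hDpos.ne' h1
  -- key real identity
  set P : ℝ := ∏ i : Fin n, y i ^ ((((i : ℕ) : ℝ) + 1) / n) with hP
  have hPpos : 0 < P := Finset.prod_pos fun i _ => Real.rpow_pos_of_pos (hy i) _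
  have hkey : A = P * B ^ (((n:ℝ) + 1) / (n:ℝ)) := by
    rw [hAQ, hQ, hB, hP,
      ← Real.finset_prod_rpow _ _ (fun i _ => pow_nonneg (hy i).le _) _,
      ← Finset.prod_mul_distrib]
    refine Finset.prod_congr rfl fun j _ => ?_
    have hjn : (j:ℕ) < n := j.isLt
    rw [← Real.rpow_natCast (y j) (n - (j:ℕ)), ← Real.rpow_natCast (y j) (n - 1 - (j:ℕ)),
      ← Real.rpow_mul (hy j).le, ← Real.rpow_add (hy j)]
    congr 1
    rw [Nat.cast_sub hjn.le, Nat.cast_sub (by omega : (j:ℕ) ≤ n - 1), Nat.cast_sub hn]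
    push_cast
    field_simp
    ring
  -- complex numerator identity
  have hnum : (τ.det : ℂ) ^ s
      = (P : ℂ) ^ s * (B : ℂ) ^ ((((n : ℂ) + 1) / (n : ℂ)) * s) := by
    rw [hdetτ, hkey, Complex.ofReal_mul,
      Complex.mul_cpow_ofReal_nonneg hPpos.le (Real.rpow_nonneg hBpos.le _)]
    congr 1
    rw [Complex.ofReal_cpow hBpos.le, ← Complex.cpow_mul]
    · congr 1
      push_cast
      ring
    · rw [← Complex.ofReal_log hBpos.le, ← Complex.ofReal_mul]
      simp [Real.pi_pos]
    · rw [← Complex.ofReal_log hBpos.le, ← Complex.ofReal_mul]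
      simp [Real.pi_pos.le]
  -- assemble
  simp only [hexp, hdetτ'B]
  rw [← tsum_mul_left]
  refine tsum_congr fun m => ?_
  rw [hnum, hP]
  ring
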